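/- Let e₁ : P → L₁ and e₂ : P → L₂ be join-completions of a poset P, with associated standard closure operators Γ₁, Γ₂ (closed sets e_i^{-1}(x↓) for x ∈ L_i). If g : L₂ → L₁ is an order embedding with g ∘ e₂ = e₁, then Γ₁ ≤ Γ₂, and g is right adjoint to the unique completely join-preserving map f : L₁ → L₂ fixing P (i.e., f(a) ≤ b ⟺ a ≤ g(b) for all a ∈ L₁, b ∈ L₂). -/
import Mathlib


variable {P : Type*} [PartialOrder P]

/-- Down-closure of a set. -/
def dcl (S : Set P) : Set P := {p | ∃ s ∈ S, p ≤ s}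

/-- Principal downset. -/
def pd (p : P) : Set P := {q | q ≤ p}

/-- Standard closure operator: extensive, monotone, idempotent, with Γ({p}) = p↓. -/
def IsStdClosure (Γ : Set P → Set P) : Prop :=
  (∀ S, S ⊆ Γ S) ∧ (∀ S T : Set P, S ⊆ T → Γ S ⊆ Γ T) ∧ (∀ S, Γ (Γ S) = Γ S) ∧
    ∀ p : P, Γ {p} = pd p

def IsClosedIn (Γ : Set P → Set P) (C : Set P) : Prop := Γ C = C

/-- Join-specification: all joins of members exist, and all singletons belong. -/
def IsJoinSpec (𝒰 : Set (Set P)) : Prop :=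
  (∀ S ∈ 𝒰, ∃ x : P, IsLUB S x) ∧ ∀ p : P, {p} ∈ 𝒰

/-- 𝒰-ideal: down-closed and closed under joins of members of 𝒰. -/
def IsUIdeal (𝒰 : Set (Set P)) (I : Set P) : Prop :=
  IsLowerSet I ∧ ∀ S ∈ 𝒰, S ⊆ I → ∀ x : P, IsLUB S x → x ∈ I

/-- The smallest 𝒰-ideal containing S. -/
def GammaU (𝒰 : Set (Set P)) (S : Set P) : Set P :=
  ⋂₀ {I : Set P | IsUIdeal 𝒰 I ∧ S ⊆ I}

/-- 𝒰⁺: sets whose join exists and lies in the 𝒰-ideal closure. -/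
def UPlus (𝒰 : Set (Set P)) : Set (Set P) :=
  {S : Set P | ∃ x : P, IsLUB S x ∧ x ∈ GammaU 𝒰 S}

/-- Υ_𝒰(S) = { ⋁T : T ∈ 𝒰⁺, T ⊆ S↓ }. -/
def Upsilon (𝒰 : Set (Set P)) (S : Set P) : Set P :=
  {x : P | ∃ T ∈ UPlus 𝒰, T ⊆ dcl S ∧ IsLUB T x}

/-- The complete lattice of 𝒰-ideals (meets = intersections, joins = closure of unions)
is a frame. -/
def IdealFrame (𝒰 : Set (Set P)) : Prop :=
  ∀ D : Set P, IsUIdeal 𝒰 D → ∀ 𝒞 : Set (Set P), (∀ C ∈ 𝒞, IsUIdeal 𝒰 C) →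
    D ∩ GammaU 𝒰 (⋃₀ 𝒞) = GammaU 𝒰 (⋃ C ∈ 𝒞, D ∩ C)

/-- The complete lattice of Γ-closed sets is a frame. -/
def ClosFrame (Γ : Set P → Set P) : Prop :=
  ∀ D : Set P, IsClosedIn Γ D → ∀ 𝒞 : Set (Set P), (∀ C ∈ 𝒞, IsClosedIn Γ C) →
    D ∩ Γ (⋃₀ 𝒞) = Γ (⋃ C ∈ 𝒞, D ∩ C)

def GammaE {P : Type*} [PartialOrder P] {L : Type*} [CompleteLattice L]
    (e : P → L) (S : Set P) : Set P :=
  {p : P | e p ≤ sSup (e '' S)}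

theorem stmt19 {L₁ L₂ : Type*} [CompleteLattice L₁] [CompleteLattice L₂]
    (e₁ : P → L₁) (e₂ : P → L₂)
    (he₁ : ∀ a b : P, e₁ a ≤ e₁ b ↔ a ≤ b)
    (hd₁ : ∀ x : L₁, x = sSup {y | y ∈ Set.range e₁ ∧ y ≤ x})
    (he₂ : ∀ a b : P, e₂ a ≤ e₂ b ↔ a ≤ b)
    (hd₂ : ∀ x : L₂, x = sSup {y | y ∈ Set.range e₂ ∧ y ≤ x})
    (g : L₂ → L₁) (hg : ∀ a b : L₂, g a ≤ g b ↔ a ≤ b)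
    (hge : ∀ p : P, g (e₂ p) = e₁ p) :
    (∀ S : Set P, GammaE e₁ S ⊆ GammaE e₂ S) ∧
    ∃ f : L₁ → L₂,
      ((∀ A : Set L₁, f (sSup A) = sSup (f '' A)) ∧ ∀ p : P, f (e₁ p) = e₂ p) ∧
      (∀ f' : L₁ → L₂,
          ((∀ A : Set L₁, f' (sSup A) = sSup (f' '' A)) ∧ ∀ p : P, f' (e₁ p) = e₂ p) →
          f' = f) ∧
      ∀ a : L₁, ∀ b : L₂, f a ≤ b ↔ a ≤ g b := by
  have hgmono : ∀ {a b : L₂}, a ≤ b → g a ≤ g b := fun h => (hg _ _).mpr h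
  set f : L₁ → L₂ := fun a => sSup (e₂ '' {p | e₁ p ≤ a}) with hfdef
  have hfix : ∀ p, f (e₁ p) = e₂ p := by
    intro p
    apply le_antisymm
    · exact sSup_le (by rintro y ⟨q, hq, rfl⟩; exact (he₂ q p).mpr ((he₁ q p).mp hq))
    · exact le_sSup ⟨p, le_rfl, rfl⟩
  have hadj : ∀ a b, f a ≤ b ↔ a ≤ g b := by
    intro a b
    constructor
    · intro h
      calc a = sSup {y | y ∈ Set.range e₁ ∧ y ≤ a} := hd₁ a
        _ ≤ g b := sSup_le (by
            rintro y ⟨⟨p, rfl⟩, hpa⟩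
            have h1 : e₂ p ≤ f a := le_sSup ⟨p, hpa, rfl⟩
            have h2 : e₂ p ≤ b := le_trans h1 h
            rw [← hge p]
            exact hgmono h2)
    · intro h
      apply sSup_le
      rintro y ⟨p, hp, rfl⟩
      have h2 : e₁ p ≤ g b := le_trans hp h
      rw [← hge p] at h2
      exact (hg _ _).mp h2
  have hfmono : ∀ {a b : L₁}, a ≤ b → f a ≤ f b :=
    fun h => (hadj _ _).mpr (le_trans h ((hadj _ _).mp le_rfl))
  have hjoin : ∀ A : Set L₁, f (sSup A) = sSup (f '' A) := by
    intro A
    apply le_antisymm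
    · rw [hadj]
      apply sSup_le
      intro a ha
      exact (hadj _ _).mp (le_sSup ⟨a, ha, rfl⟩)
    · exact sSup_le (by rintro y ⟨a, ha, rfl⟩; exact hfmono (le_sSup ha))
  constructor
  · intro S p hp
    have hle : sSup (e₁ '' S) ≤ g (sSup (e₂ '' S)) := by
      apply sSup_le
      rintro y ⟨s, hs, rfl⟩
      rw [← hge s]
      exact hgmono (le_sSup ⟨s, hs, rfl⟩)
    have h2 : e₁ p ≤ g (sSup (e₂ '' S)) := le_trans hp hle
    rw [← hge p] at h2
    exact (hg _ _).mp h2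
  · refine ⟨f, ⟨hjoin, hfix⟩, ?_, hadj⟩
    rintro f' ⟨hf'join, hf'fix⟩
    funext a
    have himg : f' '' {y | y ∈ Set.range e₁ ∧ y ≤ a} = f '' {y | y ∈ Set.range e₁ ∧ y ≤ a} := by
      apply Set.image_congr
      rintro y ⟨⟨p, rfl⟩, _⟩
      rw [hf'fix p, hfix p]
    calc f' a = f' (sSup {y | y ∈ Set.range e₁ ∧ y ≤ a}) := by rw [← hd₁ a]
      _ = sSup (f' '' {y | y ∈ Set.range e₁ ∧ y ≤ a}) := hf'join _
      _ = sSup (f '' {y | y ∈ Set.range e₁ ∧ y ≤ a}) := by rw [himg]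
      _ = f (sSup {y | y ∈ Set.range e₁ ∧ y ≤ a}) := (hjoin _).symm
      _ = f a := by rw [← hd₁ a]
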